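/- Let $\Omega \subset \mathbb{R}^d$ be open and bounded with finite Lebesgue measure, and let $(f_k)_k$ be measurable functions $\Omega \to \mathbb{R}$. Suppose that for every $j \in \mathbb{N}$ there exist measurable sets $E_k^j \subset \Omega$ with $\sup_k |E_k^j| \le \eta_j$ and functions $g_k^j$ converging in $L^1(\Omega)$ as $k \to \infty$, such that $\int_{\Omega \setminus E_k^j} |f_k - g_k^j|\,dx \le C_j$, where $\eta_j \to 0$ and $C_j \to 0$ as $j \to \infty$, and suppose $|f_k| \le \sigma$ uniformly. Then $(f_k)_k$ is a Cauchy sequence in $L^1(\Omega)$. -/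

import Mathlib

open MeasureTheory Filter

/-- Multiscale Cauchy estimate: a uniformly bounded sequence which, at every scale `j`, is
`L¹`-close (outside exceptional sets of small measure) to a sequence converging in `L¹`, is
itself Cauchy in `L¹(Ω)`. -/
theorem multiscale_cauchy (d : ℕ) (Ω : Set (Fin d → ℝ)) (hΩo : IsOpen Ω)
    (hΩb : Bornology.IsBounded Ω) (hΩfin : volume Ω < ⊤)
    (σ : ℝ) (f : ℕ → (Fin d → ℝ) → ℝ) (hfmeas : ∀ k, Measurable (f k))
    (hfbd : ∀ k x, x ∈ Ω → |f k x| ≤ σ)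
    (η C : ℕ → ℝ) (hη : Tendsto η atTop (nhds 0)) (hC : Tendsto C atTop (nhds 0))
    (E : ℕ → ℕ → Set (Fin d → ℝ)) (hEmeas : ∀ j k, MeasurableSet (E j k))
    (hEsub : ∀ j k, E j k ⊆ Ω) (hEvol : ∀ j k, volume (E j k) ≤ ENNReal.ofReal (η j))
    (g : ℕ → ℕ → (Fin d → ℝ) → ℝ) (hgint : ∀ j k, IntegrableOn (g j k) Ω)
    (hgconv : ∀ j, ∃ G : (Fin d → ℝ) → ℝ, IntegrableOn G Ω ∧
      Tendsto (fun k => ∫ x in Ω, |g j k x - G x|) atTop (nhds 0))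
    (hclose : ∀ j k, ∫ x in Ω \ E j k, |f k x - g j k x| ≤ C j) :
    ∀ ε : ℝ, 0 < ε → ∃ K : ℕ, ∀ k ≥ K, ∀ l ≥ K,
      ∫ x in Ω, |f k x - f l x| ≤ ε := by
  intro ε hε
  set S : ℝ := max σ 0 with hSdef
  have hS0 : (0:ℝ) ≤ S := le_max_right _ _
  have hfbd' : ∀ k x, x ∈ Ω → |f k x| ≤ S := fun k x hx =>
    (hfbd k x hx).trans (le_max_left _ _)
  have hδ : (0:ℝ) < ε / (16 * (S + 1)) := by positivity
  set δ : ℝ := ε / (16 * (S + 1)) with hδdef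
  -- choose the scale j
  obtain ⟨N1, hN1⟩ := Metric.tendsto_atTop.mp hC (ε / 8) (by linarith)
  obtain ⟨N2, hN2⟩ := Metric.tendsto_atTop.mp hη δ hδ
  set j : ℕ := max N1 N2 with hjdef
  have hCj : C j ≤ ε / 8 := by
    have := hN1 j (le_max_left _ _)
    rw [Real.dist_eq, sub_zero] at this
    exact (le_abs_self _).trans this.le
  have hηj : max (η j) 0 ≤ δ := by
    have := hN2 j (le_max_right _ _)
    rw [Real.dist_eq, sub_zero] at this
    exact max_le ((le_abs_self _).trans this.le) hδ.le
  obtain ⟨G, hGint, hGconv⟩ := hgconv j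
  obtain ⟨K, hK⟩ := Metric.tendsto_atTop.mp hGconv (ε / 8) (by linarith)
  have hKbound : ∀ m ≥ K, ∫ x in Ω, |g j m x - G x| ≤ ε / 8 := by
    intro m hm
    have := hK m hm
    rw [Real.dist_eq, sub_zero] at this
    exact (le_abs_self _).trans this.le
  refine ⟨K, fun k hk l hl => ?_⟩
  -- integrability facts
  have hfint : ∀ m, IntegrableOn (f m) Ω := by
    intro m
    refine Measure.integrableOn_of_bounded hΩfin.ne
      (hfmeas m).aestronglyMeasurable (M := S) ?_
    filter_upwards [ae_restrict_mem hΩo.measurableSet] with x hx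
    simpa [Real.norm_eq_abs] using hfbd' m x hx
  have hfgint : ∀ m, IntegrableOn (fun x => |f m x - g j m x|) Ω := fun m =>
    ((hfint m).sub (hgint j m)).abs
  have hgGint : ∀ m, IntegrableOn (fun x => |g j m x - G x|) Ω := fun m =>
    ((hgint j m).sub hGint).abs
  have hGgint : ∀ m, IntegrableOn (fun x => |G x - g j m x|) Ω := fun m =>
    (hGint.sub (hgint j m)).abs
  have hffint : IntegrableOn (fun x => |f k x - f l x|) Ω := ((hfint k).sub (hfint l)).abs
  have hgfl : IntegrableOn (fun x => |g j l x - f l x|) Ω := ((hgint j l).sub (hfint l)).abs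
  have h12 : IntegrableOn (fun x => |f k x - g j k x| + |g j k x - G x|) Ω :=
    (hfgint k).add (hgGint k)
  have h123 : IntegrableOn
      (fun x => |f k x - g j k x| + |g j k x - G x| + |G x - g j l x|) Ω :=
    h12.add (hGgint l)
  have hφint : IntegrableOn (fun x => |f k x - g j k x| + |g j k x - G x| + |G x - g j l x|
      + |g j l x - f l x|) Ω := h123.add hgfl
  set B : Set (Fin d → ℝ) := E j k ∪ E j l with hBdef
  have hBmeas : MeasurableSet B := (hEmeas j k).union (hEmeas j l)
  -- split the integral
  have hsplit : ∫ x in Ω, |f k x - f l x| =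
      (∫ x in Ω \ B, |f k x - f l x|) + ∫ x in Ω ∩ B, |f k x - f l x| := by
    rw [← setIntegral_union Set.disjoint_sdiff_inter
      (hΩo.measurableSet.inter hBmeas)
      (hffint.mono_set Set.diff_subset) (hffint.mono_set Set.inter_subset_left),
      Set.diff_union_inter]
  -- bound the bad part
  have hbadvol : (volume (Ω ∩ B)).toReal ≤ 2 * δ := by
    have h1 : volume (Ω ∩ B) ≤ ENNReal.ofReal (η j) + ENNReal.ofReal (η j) :=
      le_trans (measure_mono Set.inter_subset_right)
        (le_trans (measure_union_le _ _) (add_le_add (hEvol j k) (hEvol j l)))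
    have h2 : (volume (Ω ∩ B)).toReal ≤
        (ENNReal.ofReal (η j) + ENNReal.ofReal (η j)).toReal :=
      ENNReal.toReal_mono (by simp) h1
    rw [ENNReal.toReal_add ENNReal.ofReal_ne_top ENNReal.ofReal_ne_top,
      ENNReal.toReal_ofReal'] at h2
    linarith [hηj]
  have hbad : ∫ x in Ω ∩ B, |f k x - f l x| ≤ ε / 4 := by
    have hnorm : ‖∫ x in Ω ∩ B, |f k x - f l x|‖ ≤ (2 * S) * (volume (Ω ∩ B)).toReal := by
      refine norm_setIntegral_le_of_norm_le_const
        (lt_of_le_of_lt (measure_mono Set.inter_subset_left) hΩfin) ?_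
      intro x hx
      have h1 := hfbd' k x hx.1
      have h2 := hfbd' l x hx.1
      rw [Real.norm_eq_abs, abs_abs]
      calc |f k x - f l x| ≤ |f k x| + |f l x| := abs_sub _ _
        _ ≤ 2 * S := by linarith
    have : ∫ x in Ω ∩ B, |f k x - f l x| ≤ (2 * S) * (volume (Ω ∩ B)).toReal :=
      (le_abs_self _).trans hnorm
    have h4 : (2 * S) * (volume (Ω ∩ B)).toReal ≤ (2 * S) * (2 * δ) := by
      apply mul_le_mul_of_nonneg_left hbadvol (by linarith)
    have h5 : (2 * S) * (2 * δ) ≤ ε / 4 := by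
      have heq : (2 * S) * (2 * δ) = (S / (S + 1)) * (ε / 4) := by
        rw [hδdef]; field_simp; ring
      have hS1 : S / (S + 1) ≤ 1 := by
        rw [div_le_one (by linarith)]; linarith
      have := mul_le_mul_of_nonneg_right hS1 (by positivity : (0:ℝ) ≤ ε / 4)
      rw [heq]; linarith
    linarith
  -- bound the good part
  have hgood : ∫ x in Ω \ B, |f k x - f l x| ≤ ε / 2 := by
    have hmono : ∫ x in Ω \ B, |f k x - f l x| ≤
        ∫ x in Ω \ B, (|f k x - g j k x| + |g j k x - G x| + |G x - g j l x|
          + |g j l x - f l x|) := by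
      refine setIntegral_mono_on (hffint.mono_set Set.diff_subset)
        (hφint.mono_set Set.diff_subset)
        (hΩo.measurableSet.diff hBmeas) ?_
      intro x _
      have t1 : |f k x - f l x| ≤ |f k x - g j k x| + |g j k x - f l x| := abs_sub_le _ _ _
      have t2 : |g j k x - f l x| ≤ |g j k x - G x| + |G x - f l x| := abs_sub_le _ _ _
      have t3 : |G x - f l x| ≤ |G x - g j l x| + |g j l x - f l x| := abs_sub_le _ _ _
      linarith
    have hsub1 : Ω \ B ⊆ Ω \ E j k := Set.diff_subset_diff_right Set.subset_union_left
    have hsub2 : Ω \ B ⊆ Ω \ E j l := Set.diff_subset_diff_right Set.subset_union_right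
    have e1 : ∫ x in Ω \ B, |f k x - g j k x| ≤ ε / 8 := by
      refine le_trans (le_trans (setIntegral_mono_set
        ((hfgint k).mono_set Set.diff_subset)
        (Eventually.of_forall fun x => abs_nonneg _)
        (HasSubset.Subset.eventuallyLE hsub1)) (hclose j k)) hCj
    have e4 : ∫ x in Ω \ B, |g j l x - f l x| ≤ ε / 8 := by
      have : ∫ x in Ω \ B, |g j l x - f l x| = ∫ x in Ω \ B, |f l x - g j l x| := by
        congr 1; ext x; rw [abs_sub_comm]
      rw [this]
      exact le_trans (le_trans (setIntegral_mono_set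
        ((hfgint l).mono_set Set.diff_subset)
        (Eventually.of_forall fun x => abs_nonneg _)
        (HasSubset.Subset.eventuallyLE hsub2)) (hclose j l)) hCj
    have e2 : ∫ x in Ω \ B, |g j k x - G x| ≤ ε / 8 :=
      le_trans (setIntegral_mono_set (hgGint k)
        (Eventually.of_forall fun x => abs_nonneg _)
        (HasSubset.Subset.eventuallyLE Set.diff_subset)) (hKbound k hk)
    have e3 : ∫ x in Ω \ B, |G x - g j l x| ≤ ε / 8 := by
      have heq : ∫ x in Ω \ B, |G x - g j l x| = ∫ x in Ω \ B, |g j l x - G x| := by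
        congr 1; ext x; rw [abs_sub_comm]
      rw [heq]
      exact le_trans (setIntegral_mono_set (hgGint l)
        (Eventually.of_forall fun x => abs_nonneg _)
        (HasSubset.Subset.eventuallyLE Set.diff_subset)) (hKbound l hl)
    have hsum : ∫ x in Ω \ B, (|f k x - g j k x| + |g j k x - G x| + |G x - g j l x|
        + |g j l x - f l x|) =
        (∫ x in Ω \ B, |f k x - g j k x|) + (∫ x in Ω \ B, |g j k x - G x|)
        + (∫ x in Ω \ B, |G x - g j l x|) + ∫ x in Ω \ B, |g j l x - f l x| := by
      rw [integral_add, integral_add, integral_add]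
      · exact (hfgint k).mono_set Set.diff_subset
      · exact (hgGint k).mono_set Set.diff_subset
      · exact h12.mono_set Set.diff_subset
      · exact (hGgint l).mono_set Set.diff_subset
      · exact h123.mono_set Set.diff_subset
      · exact hgfl.mono_set Set.diff_subset
    rw [hsum] at hmono
    linarith
  linarith [hsplit, hbad, hgood]
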